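/- For a set of formulas Γ and terms u1, u2, the following are equivalent: (1) u1 ≡_Γ u2; (2) there exists a finite sequence of terms t_0, ..., t_n with n ≥ 0 such that t_0 = u1, t_n = u2, and for every 0 ≤ i < n the equation t_i = t_{i+1} belongs to [Γ], where [Γ] = { s^n t1 = s^n t2 : n ∈ ℕ, and either t1 = t2 ∈ Γ or t2 = t1 ∈ Γ }. -/

import Mathlib

namespace CLKID

/-- Terms of the language: variables, the constant `0`, and the unary function `s`. -/
inductive Tm : Type where
  | var : ℕ → Tm
  | zero : Tm
  | s : Tm → Tm
deriving DecidableEq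

/-- `sIter n t` is the term `s^n t`. -/
def sIter : ℕ → Tm → Tm
  | 0, t => t
  | n + 1, t => Tm.s (sIter n t)

/-- Substitution on terms. -/
def Tm.subst (θ : ℕ → Tm) : Tm → Tm
  | .var x => θ x
  | .zero => .zero
  | .s t => .s (t.subst θ)

/-- Free variables of a term. -/
def Tm.fv : Tm → Set ℕ
  | .var x => {x}
  | .zero => ∅
  | .s t => t.fv

/-- Subterms of a term. -/
def Tm.sub : Tm → Set Tm
  | .var x => {Tm.var x}
  | .zero => {Tm.zero}
  | .s t => insert (Tm.s t) t.sub

/-- The variable of a term (`none` if the term is of the form `s^n 0`). -/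
def Tm.varOf : Tm → Option ℕ
  | .var x => some x
  | .zero => none
  | .s t => t.varOf

/-- Formulas: equations, the two inductive-predicate atoms `Add1`/`Add2`,
    and the usual first-order connectives and quantifiers. -/
inductive Fm : Type where
  | eq : Tm → Tm → Fm
  | add1 : Tm → Tm → Tm → Fm
  | add2 : Tm → Tm → Tm → Fm
  | not : Fm → Fm
  | and : Fm → Fm → Fm
  | or : Fm → Fm → Fm
  | imp : Fm → Fm → Fm
  | all : ℕ → Fm → Fm
  | ex : ℕ → Fm → Fm
deriving DecidableEq

/-- Substitution on formulas. -/
def Fm.subst (θ : ℕ → Tm) : Fm → Fm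
  | .eq t u => .eq (t.subst θ) (u.subst θ)
  | .add1 a b c => .add1 (a.subst θ) (b.subst θ) (c.subst θ)
  | .add2 a b c => .add2 (a.subst θ) (b.subst θ) (c.subst θ)
  | .not φ => .not (φ.subst θ)
  | .and φ ψ => .and (φ.subst θ) (ψ.subst θ)
  | .or φ ψ => .or (φ.subst θ) (ψ.subst θ)
  | .imp φ ψ => .imp (φ.subst θ) (ψ.subst θ)
  | .all x φ => .all x (φ.subst (Function.update θ x (Tm.var x)))
  | .ex x φ => .ex x (φ.subst (Function.update θ x (Tm.var x)))

/-- Free variables of a formula. -/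
def Fm.fv : Fm → Set ℕ
  | .eq t u => t.fv ∪ u.fv
  | .add1 a b c => a.fv ∪ b.fv ∪ c.fv
  | .add2 a b c => a.fv ∪ b.fv ∪ c.fv
  | .not φ => φ.fv
  | .and φ ψ => φ.fv ∪ ψ.fv
  | .or φ ψ => φ.fv ∪ ψ.fv
  | .imp φ ψ => φ.fv ∪ ψ.fv
  | .all x φ => φ.fv \ {x}
  | .ex x φ => φ.fv \ {x}

/-- Terms occurring in a formula. -/
def Fm.tms : Fm → Set Tm
  | .eq t u => t.sub ∪ u.sub
  | .add1 a b c => a.sub ∪ b.sub ∪ c.sub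
  | .add2 a b c => a.sub ∪ b.sub ∪ c.sub
  | .not φ => φ.tms
  | .and φ ψ => φ.tms ∪ ψ.tms
  | .or φ ψ => φ.tms ∪ ψ.tms
  | .imp φ ψ => φ.tms ∪ ψ.tms
  | .all _ φ => φ.tms
  | .ex _ φ => φ.tms

/-- The substitution `[x := t]`. -/
def sub1 (x : ℕ) (t : Tm) : ℕ → Tm := fun y => if y = x then t else Tm.var y

/-- The simultaneous substitution `[v1 := t, v2 := u]`. -/
def sub2 (v1 v2 : ℕ) (t u : Tm) : ℕ → Tm :=
  fun z => if z = v1 then t else if z = v2 then u else Tm.var z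

/-- `≡_Γ`: the smallest congruence relation on terms containing all pairs `(t, u)`
    with the equation `t = u` in `Γ`. -/
inductive EqvTm (Γ : Set Fm) : Tm → Tm → Prop where
  | base {t u : Tm} : Fm.eq t u ∈ Γ → EqvTm Γ t u
  | refl (t : Tm) : EqvTm Γ t t
  | symm {t u : Tm} : EqvTm Γ t u → EqvTm Γ u t
  | trans {t u v : Tm} : EqvTm Γ t u → EqvTm Γ u v → EqvTm Γ t v
  | sCongr {t u : Tm} : EqvTm Γ t u → EqvTm Γ (Tm.s t) (Tm.s u)

/-- `t ~_Γ u` : `s^n t ≡_Γ s^m u` for some naturals `n`, `m`. -/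
def DepTm (Γ : Set Fm) (t u : Tm) : Prop := ∃ n m : ℕ, EqvTm Γ (sIter n t) (sIter m u)

/-- A sequent: a pair of finite sets of formulas. -/
structure Seq where
  ant : Finset Fm
  suc : Finset Fm

/-- The antecedent of a sequent, as a set of formulas. -/
def antSet (S : Seq) : Set Fm := ↑S.ant

/-- `[Γ]` from Lemma on chains: `{ s^n t1 = s^n t2 | t1 = t2 ∈ Γ or t2 = t1 ∈ Γ }`. -/
def brkt (Γ : Set Fm) : Set Fm :=
  {φ | ∃ (n : ℕ) (t1 t2 : Tm), φ = Fm.eq (sIter n t1) (sIter n t2) ∧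
        (Fm.eq t1 t2 ∈ Γ ∨ Fm.eq t2 t1 ∈ Γ)}

/-- `B1(Γ ⊢ Δ)` : second arguments of `Add1` atoms in the consequent. -/
def B1 (S : Seq) : Set Tm := {b | ∃ a c, Fm.add1 a b c ∈ S.suc}

/-- `C(Γ ⊢ Δ)` : third arguments of `Add2` atoms in the antecedent
    or `Add1` atoms in the consequent. -/
def Cset (S : Seq) : Set Tm :=
  {c | (∃ a b, Fm.add2 a b c ∈ S.ant) ∨ (∃ a b, Fm.add1 a b c ∈ S.suc)}

/-- Index sequent. -/
def IndexSequent (S : Seq) : Prop :=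
  (∀ t ∈ B1 S, ∀ u ∈ Cset S, ¬ DepTm (antSet S) t u) ∧
  (∀ b ∈ B1 S, ∀ b' ∈ B1 S, ∀ n m : ℕ, EqvTm (antSet S) (sIter n b) (sIter m b') → n = m)

/-- Auxiliary: the chain relation. -/
def Chain' (Γ : Set Fm) (u1 u2 : Tm) : Prop :=
  ∃ (n : ℕ) (t : ℕ → Tm), t 0 = u1 ∧ t n = u2 ∧
    ∀ i, i < n → Fm.eq (t i) (t (i + 1)) ∈ brkt Γ

lemma brkt_symm {Γ : Set Fm} {a b : Tm} (h : Fm.eq a b ∈ brkt Γ) :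
    Fm.eq b a ∈ brkt Γ := by
  obtain ⟨n, t1, t2, heq, hor⟩ := h
  exact ⟨n, t2, t1, by injection heq with h1 h2; rw [h1, h2], hor.symm⟩

lemma brkt_s {Γ : Set Fm} {a b : Tm} (h : Fm.eq a b ∈ brkt Γ) :
    Fm.eq (Tm.s a) (Tm.s b) ∈ brkt Γ := by
  obtain ⟨n, t1, t2, heq, hor⟩ := h
  injection heq with h1 h2
  exact ⟨n + 1, t1, t2, by rw [h1, h2]; rfl, hor⟩

lemma chain_refl (Γ : Set Fm) (u : Tm) : Chain' Γ u u :=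
  ⟨0, fun _ => u, rfl, rfl, fun i hi => absurd hi (Nat.not_lt_zero i)⟩

lemma chain_base {Γ : Set Fm} {u1 u2 : Tm} (h : Fm.eq u1 u2 ∈ Γ) :
    Chain' Γ u1 u2 :=
  ⟨1, fun i => if i = 0 then u1 else u2, rfl, rfl, fun i hi => by
    interval_cases i
    simpa using ⟨0, u1, u2, rfl, Or.inl h⟩⟩

lemma chain_symm {Γ : Set Fm} {u1 u2 : Tm} (h : Chain' Γ u1 u2) :
    Chain' Γ u2 u1 := by
  obtain ⟨n, t, h0, hn, hc⟩ := h
  refine ⟨n, fun i => t (n - i), by simpa, by simpa, fun i hi => ?_⟩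
  show Fm.eq (t (n - i)) (t (n - (i + 1))) ∈ brkt Γ
  have h1 : n - i = (n - (i + 1)) + 1 := by omega
  rw [h1]
  exact brkt_symm (hc (n - (i + 1)) (by omega))

lemma chain_trans {Γ : Set Fm} {u1 u2 u3 : Tm} (h : Chain' Γ u1 u2)
    (h' : Chain' Γ u2 u3) : Chain' Γ u1 u3 := by
  obtain ⟨n, t, h0, hn, hc⟩ := h
  obtain ⟨m, t', h0', hm', hc'⟩ := h'
  refine ⟨n + m, fun i => if i < n then t i else t' (i - n), ?_, ?_, ?_⟩
  · by_cases hn0 : 0 < n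
    · simpa [hn0]
    · have : n = 0 := by omega
      simp [this, h0', ← hn, this, h0]
  · have : ¬ (n + m < n) := by omega
    simpa [this] using hm'
  · intro i hi
    by_cases h1 : i + 1 < n
    · have h2 : i < n := by omega
      simpa [h1, h2] using hc i h2
    · by_cases h2 : i < n
      · have hin : i + 1 = n := by omega
        have : t' (i + 1 - n) = t (i + 1) := by rw [hin]; simp [h0', hn]
        simpa [h1, h2, this, show t' 0 = t (i + 1) by rw [h0', ← hn, hin]] using hc i h2
      · have h3 : ¬ (i + 1 < n) := h1
        have h4 : i + 1 - n = (i - n) + 1 := by omega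
        simpa [h2, h3, h4] using hc' (i - n) (by omega)

lemma chain_sCongr {Γ : Set Fm} {u1 u2 : Tm} (h : Chain' Γ u1 u2) :
    Chain' Γ (Tm.s u1) (Tm.s u2) := by
  obtain ⟨n, t, h0, hn, hc⟩ := h
  exact ⟨n, fun i => Tm.s (t i), by simp [h0], by simp [hn],
    fun i hi => brkt_s (hc i hi)⟩

lemma eqv_sIter {Γ : Set Fm} {t1 t2 : Tm} (n : ℕ) (h : EqvTm Γ t1 t2) :
    EqvTm Γ (sIter n t1) (sIter n t2) := by
  induction n with
  | zero => exact h
  | succ k ih => exact EqvTm.sCongr ih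

lemma brkt_eqv {Γ : Set Fm} {a b : Tm} (h : Fm.eq a b ∈ brkt Γ) :
    EqvTm Γ a b := by
  obtain ⟨n, t1, t2, heq, hor⟩ := h
  injection heq with h1 h2
  subst h1; subst h2
  rcases hor with h | h
  · exact eqv_sIter n (EqvTm.base h)
  · exact eqv_sIter n (EqvTm.symm (EqvTm.base h))

/-- `u1 ≡_Γ u2` iff `u1` and `u2` are joined by a finite chain
    of equations in `[Γ]`. -/
theorem eqv_iff_chain (Γ : Set Fm) (u1 u2 : Tm) :
    EqvTm Γ u1 u2 ↔
      ∃ (n : ℕ) (t : ℕ → Tm), t 0 = u1 ∧ t n = u2 ∧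
        ∀ i, i < n → Fm.eq (t i) (t (i + 1)) ∈ brkt Γ := by
  constructor
  · intro h
    induction h with
    | base h => exact chain_base h
    | refl t => exact chain_refl Γ t
    | symm _ ih => exact chain_symm ih
    | trans _ _ ih1 ih2 => exact chain_trans ih1 ih2
    | sCongr _ ih => exact chain_sCongr ih
  · rintro ⟨n, t, h0, hn, hc⟩
    subst h0; subst hn
    induction n with
    | zero => exact EqvTm.refl _
    | succ k ih =>
      exact EqvTm.trans (ih (fun i hi => hc i (by omega)))
        (brkt_eqv (hc k (by omega)))


end CLKID
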